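/- arXiv:1907.12963 — 2 statements merged into one kernel-verified Lean document; each statement's English description precedes it below -/
import Mathlib

section
/- For all integers p, q ≥ 2, the energy of the line graph of the complete bipartite graph K_{p,q} equals the energy of the complement of the line graph of K_{p,q}; that is, E(L(K_{p,q})) = E(complement of L(K_{p,q})). -/
open Polynomial

/-- Adjacency matrix over ℝ, using classical instances. -/
noncomputable def adjMat {V : Type*} [Finite V] (G : SimpleGraph V) : Matrix V V ℝ :=
  letI := Fintype.ofFinite V
  letI := Classical.decEq V
  letI := Classical.decRel G.Adj
  G.adjMatrix ℝ

/-- The energy of a graph: the sum of the absolute values of the eigenvalues of its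
adjacency matrix (equivalently, of the roots of its characteristic polynomial, with
multiplicity, which all are real since the matrix is real symmetric). -/
noncomputable def energy {V : Type*} [Finite V] (G : SimpleGraph V) : ℝ :=
  letI := Fintype.ofFinite V
  letI := Classical.decEq V
  (((adjMat G).charpoly).roots.map (fun x => |x|)).sum

namespace EnergyAux

open Matrix
open scoped Kronecker

/-! ### A (non-orthogonal) eigenbasis matrix for `J` on `Fin n` -/

noncomputable def T (n : ℕ) [NeZero n] : Matrix (Fin n) (Fin n) ℝ :=
  Matrix.of fun i j => if j = 0 then 1 else if i = j then 1 else if i = 0 then -1 else 0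

noncomputable def U (n : ℕ) [NeZero n] : Matrix (Fin n) (Fin n) ℝ :=
  Matrix.of fun i j => if i = 0 then (n : ℝ)⁻¹ else (if i = j then 1 else 0) - (n : ℝ)⁻¹

noncomputable def Jm (n : ℕ) : Matrix (Fin n) (Fin n) ℝ := Matrix.of fun _ _ => 1

lemma colsum (n : ℕ) [NeZero n] (j : Fin n) :
    ∑ k, T n k j = if j = 0 then (n : ℝ) else 0 := by
  rcases eq_or_ne j 0 with rfl | h
  · simp [T]
  · have hk : ∀ k : Fin n, T n k j
        = ((if k = j then (1:ℝ) else 0) + (if k = 0 then -1 else 0)) := by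
      intro k
      simp only [T, Matrix.of_apply, if_neg h]
      rcases eq_or_ne k j with rfl | hkj <;> rcases eq_or_ne k 0 with rfl | hk0 <;>
        simp_all
    rw [if_neg h]
    simp [hk, Finset.sum_add_distrib]

lemma U_mul_T (n : ℕ) [NeZero n] : U n * T n = 1 := by
  ext i j
  rw [Matrix.mul_apply]
  rcases eq_or_ne i 0 with rfl | hi
  · have hk : ∀ k : Fin n, U n 0 k * T n k j = (n : ℝ)⁻¹ * T n k j := by
      intro k; simp [U]
    rw [Finset.sum_congr rfl fun k _ => hk k, ← Finset.mul_sum, colsum]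
    have hn : (n : ℝ) ≠ 0 := Nat.cast_ne_zero.mpr (NeZero.ne n)
    rcases eq_or_ne j 0 with rfl | hj
    · simp [Matrix.one_apply, inv_mul_cancel₀ hn]
    · simp [Matrix.one_apply, Ne.symm hj, hj]
  · have hk : ∀ k : Fin n, U n i k * T n k j
        = (if k = i then T n k j else 0) - (n : ℝ)⁻¹ * T n k j := by
      intro k
      simp only [U, Matrix.of_apply, if_neg hi]
      rcases eq_or_ne k i with rfl | h
      · simp; ring
      · simp [h, Ne.symm h]
    rw [Finset.sum_congr rfl fun k _ => hk k, Finset.sum_sub_distrib, ← Finset.mul_sum, colsum,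
      Finset.sum_ite_eq' Finset.univ i (fun k => T n k j)]
    have hn : (n : ℝ) ≠ 0 := Nat.cast_ne_zero.mpr (NeZero.ne n)
    rcases eq_or_ne j 0 with rfl | hj
    · simp [Matrix.one_apply, hi, T, inv_mul_cancel₀ hn]
    · simp [Matrix.one_apply, T, hj, hi]

lemma T_mul_U (n : ℕ) [NeZero n] : T n * U n = 1 :=
  mul_eq_one_comm.mp (U_mul_T n)

lemma J_mul_T (n : ℕ) [NeZero n] :
    Jm n * T n = T n * Matrix.diagonal (fun i => if i = 0 then (n : ℝ) else 0) := by
  ext i j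
  rw [Matrix.mul_apply, Matrix.mul_diagonal]
  have : ∀ k : Fin n, Jm n i k * T n k j = T n k j := by intro k; simp [Jm]
  rw [Finset.sum_congr rfl fun k _ => this k, colsum]
  rcases eq_or_ne j 0 with rfl | hj
  · simp [T, mul_comm]
  · simp [hj]

lemma A_mul_T (n : ℕ) [NeZero n] :
    (Jm n - 1) * T n
      = T n * Matrix.diagonal (fun i => (if i = 0 then (n : ℝ) else 0) - 1) := by
  have : Matrix.diagonal (fun i : Fin n => (if i = 0 then (n : ℝ) else 0) - 1)
      = Matrix.diagonal (fun i : Fin n => if i = 0 then (n : ℝ) else 0) - 1 := by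
    rw [← Matrix.diagonal_one, Matrix.diagonal_sub]
  rw [this, Matrix.mul_sub, Matrix.mul_one, Matrix.sub_mul, Matrix.one_mul, J_mul_T]

/-! ### Characteristic polynomials via conjugation -/

lemma charpoly_conj {m : Type*} [Fintype m] [DecidableEq m] (M S U D : Matrix m m ℝ)
    (hSU : S * U = 1) (hMS : M * S = S * D) : M.charpoly = D.charpoly := by
  classical
  have hM : M = S * D * U := by
    calc M = M * S * U := by rw [Matrix.mul_assoc, hSU, Matrix.mul_one]
    _ = S * D * U := by rw [hMS]
  let f : Matrix m m ℝ →+* Matrix m m ℝ[X] := (C : ℝ →+* ℝ[X]).mapMatrix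
  have hfSU : f S * f U = 1 := by rw [← _root_.map_mul, hSU, _root_.map_one]
  have hkey : charmatrix M = f S * charmatrix D * f U := by
    rw [hM, charmatrix, charmatrix]
    rw [Matrix.mul_sub, Matrix.sub_mul]
    congr 1
    · rw [Matrix.scalar_apply, ← Matrix.smul_one_eq_diagonal]
      rw [Matrix.mul_smul, Matrix.mul_one, Matrix.smul_mul, hfSU]
    · show f (S * D * U) = f S * f D * f U
      rw [_root_.map_mul, _root_.map_mul]
  rw [Matrix.charpoly, Matrix.charpoly, hkey, Matrix.det_mul, Matrix.det_mul]
  have hdet : det (f S) * det (f U) = 1 := by rw [← Matrix.det_mul, hfSU, Matrix.det_one]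
  calc det (f S) * det (charmatrix D) * det (f U)
      = det (f S) * det (f U) * det (charmatrix D) := by ring
  _ = det (charmatrix D) := by rw [hdet, one_mul]

lemma charpoly_diagonal_roots {m : Type*} [Fintype m] [DecidableEq m] (d : m → ℝ) :
    (Matrix.charpoly (Matrix.diagonal d)).roots = Finset.univ.val.map d := by
  have hcm : charmatrix (Matrix.diagonal d)
      = Matrix.diagonal (fun i => (X : ℝ[X]) - C (d i)) := by
    ext i j
    rcases eq_or_ne i j with rfl | h
    · simp
    · simp [h, Matrix.diagonal_apply_ne _ h]
  rw [Matrix.charpoly, hcm, Matrix.det_diagonal]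
  have : ∏ i, ((X : ℝ[X]) - C (d i))
      = ((Finset.univ.val.map d).map fun a => (X : ℝ[X]) - C a).prod := by
    rw [Multiset.map_map]
    rfl
  rw [this, Polynomial.roots_multiset_prod_X_sub_C]

/-! ### Energy via an explicit diagonalization -/

lemma adjMat_apply {V : Type*} [Finite V] (G : SimpleGraph V) (i j : V) :
    adjMat G i j = (letI := Classical.decRel G.Adj; if G.Adj i j then (1:ℝ) else 0) := rfl

lemma adjMat_apply_pos {V : Type*} [Finite V] {G : SimpleGraph V} {i j : V} (h : G.Adj i j) :
    adjMat G i j = 1 := by rw [adjMat_apply]; exact if_pos h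

lemma adjMat_apply_neg {V : Type*} [Finite V] {G : SimpleGraph V} {i j : V} (h : ¬ G.Adj i j) :
    adjMat G i j = 0 := by rw [adjMat_apply]; exact if_neg h

lemma energy_eq_of_conj {V : Type*} [Finite V] (G : SimpleGraph V) {m : Type*} [Fintype m]
    [DecidableEq m] (φ : m ≃ V) (Mm S U : Matrix m m ℝ) (d : m → ℝ)
    (hM : ∀ x y, adjMat G (φ x) (φ y) = Mm x y)
    (hSU : S * U = 1) (hMS : Mm * S = S * Matrix.diagonal d) :
    energy G = ∑ x, |d x| := by
  letI := Fintype.ofFinite V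
  letI := Classical.decEq V
  have h1 : (adjMat G).submatrix φ φ = Mm := by ext x y; exact hM x y
  have h2 : (adjMat G).charpoly = Mm.charpoly := by
    rw [← h1]
    have h3 := Matrix.charpoly_reindex (R := ℝ) φ.symm (adjMat G)
    rw [Matrix.reindex_apply, Equiv.symm_symm] at h3
    exact h3.symm
  unfold energy
  rw [h2, charpoly_conj Mm S U _ hSU hMS, charpoly_diagonal_roots, Multiset.map_map]
  rfl

/-! ### The edge set of the complete bipartite graph -/

variable {p q : ℕ}

noncomputable def φ (p q : ℕ) :
    (Fin p × Fin q) ≃ (completeBipartiteGraph (Fin p) (Fin q)).edgeSet := by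
  refine Equiv.ofBijective
    (fun x => ⟨s(Sum.inl x.1, Sum.inr x.2), by simp [completeBipartiteGraph]⟩) ⟨?_, ?_⟩
  · rintro ⟨a, b⟩ ⟨c, d⟩ h
    simp only [Subtype.mk.injEq, Sym2.eq_iff] at h
    replace h := Sym2.eq_iff.mp (congrArg Subtype.val h)
    rcases h with ⟨h1, h2⟩ | ⟨h1, h2⟩
    · simp_all
    · simp_all
  · rintro ⟨e, he⟩
    induction e using Sym2.ind with
    | _ v w =>
      rw [SimpleGraph.mem_edgeSet] at he
      cases v with
      | inl a =>
        cases w with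
        | inl a' => simp [completeBipartiteGraph] at he
        | inr b => exact ⟨(a, b), rfl⟩
      | inr b =>
        cases w with
        | inl a => exact ⟨(a, b), Subtype.ext (Sym2.eq_swap)⟩
        | inr b' => simp [completeBipartiteGraph] at he

lemma coe_φ (x : Fin p × Fin q) :
    (φ p q x : Sym2 (Fin p ⊕ Fin q)) = s(Sum.inl x.1, Sum.inr x.2) := rfl

lemma adj_iff (x y : Fin p × Fin q) :
    (completeBipartiteGraph (Fin p) (Fin q)).lineGraph.Adj (φ p q x) (φ p q y)
      ↔ x ≠ y ∧ (x.1 = y.1 ∨ x.2 = y.2) := by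
  rw [SimpleGraph.lineGraph_adj_iff_exists]
  constructor
  · rintro ⟨hne, v, hv1, hv2⟩
    refine ⟨fun h => hne (by rw [h]), ?_⟩
    rw [coe_φ, Sym2.mem_iff] at hv1 hv2
    rcases hv1 with rfl | rfl <;> rcases hv2 with h | h <;> simp_all
  · rintro ⟨hne, h | h⟩
    · refine ⟨fun hc => hne ((φ p q).injective hc), Sum.inl x.1, ?_, ?_⟩ <;>
        rw [coe_φ, Sym2.mem_iff] <;> simp [h]
    · refine ⟨fun hc => hne ((φ p q).injective hc), Sum.inr x.2, ?_, ?_⟩ <;>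
        rw [coe_φ, Sym2.mem_iff] <;> simp [h]

lemma compl_adj_iff (x y : Fin p × Fin q) :
    ((completeBipartiteGraph (Fin p) (Fin q)).lineGraph)ᶜ.Adj (φ p q x) (φ p q y)
      ↔ x.1 ≠ y.1 ∧ x.2 ≠ y.2 := by
  rw [SimpleGraph.compl_adj, adj_iff]
  constructor
  · rintro ⟨hne, hrest⟩
    have hxy : x ≠ y := fun h => hne (by rw [h])
    push_neg at hrest
    exact hrest hxy
  · rintro ⟨h1, h2⟩
    have hxy : x ≠ y := fun h => h1 (by rw [h])
    exact ⟨fun hc => hxy ((φ p q).injective hc), fun hc => by tauto⟩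

/-! ### Summation helper -/

lemma sum_if_zero {n : ℕ} [NeZero n] (a b : ℝ) :
    ∑ i : Fin n, (if i = 0 then a else b) = a + ((n : ℝ) - 1) * b := by
  have hk : ∀ i : Fin n, (if i = 0 then a else b) = (if i = 0 then a - b else 0) + b := by
    intro i; split <;> ring
  rw [Finset.sum_congr rfl fun i _ => hk i, Finset.sum_add_distrib,
    Finset.sum_ite_eq' Finset.univ (0 : Fin n) (fun _ => a - b), Finset.sum_const,
    Finset.card_univ, Fintype.card_fin]
  simp only [Finset.mem_univ, if_true, nsmul_eq_mul]
  ring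

noncomputable def dLin (p q : ℕ) [NeZero p] [NeZero q] : Fin p × Fin q → ℝ :=
  fun x => ((if x.1 = 0 then (p : ℝ) else 0) - 1) + ((if x.2 = 0 then (q : ℝ) else 0) - 1)

noncomputable def dComp (p q : ℕ) [NeZero p] [NeZero q] : Fin p × Fin q → ℝ :=
  fun x => (if x.1 = 0 then (p : ℝ) else 0) * (if x.2 = 0 then (q : ℝ) else 0) - 1 - dLin p q x

end EnergyAux

open EnergyAux Matrix in
open scoped Kronecker in
theorem energy_lineGraph_completeBipartite_eq_energy_compl (p q : ℕ)
    (hp : 2 ≤ p) (hq : 2 ≤ q) :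
    energy (completeBipartiteGraph (Fin p) (Fin q)).lineGraph
      = energy ((completeBipartiteGraph (Fin p) (Fin q)).lineGraph)ᶜ := by
  haveI : NeZero p := ⟨by omega⟩
  haveI : NeZero q := ⟨by omega⟩
  set G := completeBipartiteGraph (Fin p) (Fin q) with hG
  set M : Matrix (Fin p × Fin q) (Fin p × Fin q) ℝ :=
    (Jm p - 1) ⊗ₖ (1 : Matrix (Fin q) (Fin q) ℝ)
      + (1 : Matrix (Fin p) (Fin p) ℝ) ⊗ₖ (Jm q - 1) with hM
  set Mc : Matrix (Fin p × Fin q) (Fin p × Fin q) ℝ := Jm p ⊗ₖ Jm q - 1 - M with hMc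
  set S : Matrix (Fin p × Fin q) (Fin p × Fin q) ℝ := T p ⊗ₖ T q with hS
  set Uk : Matrix (Fin p × Fin q) (Fin p × Fin q) ℝ := U p ⊗ₖ U q with hUk
  have hSU : S * Uk = 1 := by
    rw [hS, hUk, ← Matrix.mul_kronecker_mul, T_mul_U, T_mul_U, Matrix.one_kronecker_one]
  have hdiagL :
      (Matrix.diagonal (fun i : Fin p => (if i = 0 then (p : ℝ) else 0) - 1))
          ⊗ₖ (1 : Matrix (Fin q) (Fin q) ℝ)
        + (1 : Matrix (Fin p) (Fin p) ℝ)
          ⊗ₖ (Matrix.diagonal (fun j : Fin q => (if j = 0 then (q : ℝ) else 0) - 1))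
      = Matrix.diagonal (dLin p q) := by
    rw [show (1 : Matrix (Fin q) (Fin q) ℝ) = Matrix.diagonal (fun _ => 1) from
        Matrix.diagonal_one.symm,
      show (1 : Matrix (Fin p) (Fin p) ℝ) = Matrix.diagonal (fun _ => 1) from
        Matrix.diagonal_one.symm,
      Matrix.diagonal_kronecker_diagonal, Matrix.diagonal_kronecker_diagonal,
      Matrix.diagonal_add]
    ext x y
    rcases eq_or_ne x y with rfl | hxy
    · simp [Matrix.diagonal_apply_eq, dLin]
    · simp [Matrix.diagonal_apply_ne _ hxy]
  have hMS : M * S = S * Matrix.diagonal (dLin p q) := by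
    rw [hM, ← hdiagL, hS, Matrix.add_mul, Matrix.mul_add]
    simp only [← Matrix.mul_kronecker_mul]
    rw [A_mul_T p, A_mul_T q, Matrix.one_mul, Matrix.one_mul, Matrix.mul_one, Matrix.mul_one]
  have hJJ : (Jm p ⊗ₖ Jm q) * S
      = S * Matrix.diagonal
          (fun x : Fin p × Fin q =>
            (if x.1 = 0 then (p : ℝ) else 0) * (if x.2 = 0 then (q : ℝ) else 0)) := by
    rw [hS, ← Matrix.mul_kronecker_mul, J_mul_T, J_mul_T, Matrix.mul_kronecker_mul,
      Matrix.diagonal_kronecker_diagonal]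
  have hdiagC : Matrix.diagonal (dComp p q)
      = Matrix.diagonal
          (fun x : Fin p × Fin q =>
            (if x.1 = 0 then (p : ℝ) else 0) * (if x.2 = 0 then (q : ℝ) else 0))
        - 1 - Matrix.diagonal (dLin p q) := by
    rw [show (1 : Matrix (Fin p × Fin q) (Fin p × Fin q) ℝ) = Matrix.diagonal (fun _ => 1) from
        Matrix.diagonal_one.symm, Matrix.diagonal_sub, Matrix.diagonal_sub]
    congr 1
  have hMcS : Mc * S = S * Matrix.diagonal (dComp p q) := by
    rw [hMc, Matrix.sub_mul, Matrix.sub_mul, hJJ, Matrix.one_mul, hMS, hdiagC,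
      Matrix.mul_sub, Matrix.mul_sub, Matrix.mul_one]
  have hadjM : ∀ x y, adjMat G.lineGraph (φ p q x) (φ p q y) = M x y := by
    rintro ⟨a, b⟩ ⟨c, d⟩
    have hE : M (a, b) (c, d)
        = (Jm p - 1) a c * (if b = d then (1:ℝ) else 0)
          + (if a = c then (1:ℝ) else 0) * (Jm q - 1) b d := by
      simp [hM, Matrix.kroneckerMap_apply, Matrix.one_apply]
    rcases eq_or_ne a c with rfl | hac <;> rcases eq_or_ne b d with rfl | hbd
    · rw [adjMat_apply_neg (by rw [adj_iff]; simp), hE]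
      simp [Jm, Matrix.sub_apply, Matrix.one_apply]
    · rw [adjMat_apply_pos (by rw [adj_iff]; simp [Prod.ext_iff, hbd]), hE]
      simp [Jm, Matrix.sub_apply, Matrix.one_apply, hbd]
    · rw [adjMat_apply_pos (by rw [adj_iff]; simp [Prod.ext_iff, hac]), hE]
      simp [Jm, Matrix.sub_apply, Matrix.one_apply, hac]
    · rw [adjMat_apply_neg (by rw [adj_iff]; simp [Prod.ext_iff, hac, hbd]), hE]
      simp [Jm, Matrix.sub_apply, Matrix.one_apply, hac, hbd]
  have hadjMc : ∀ x y, adjMat G.lineGraphᶜ (φ p q x) (φ p q y) = Mc x y := by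
    rintro ⟨a, b⟩ ⟨c, d⟩
    have hE : Mc (a, b) (c, d)
        = 1 - (if (a, b) = (c, d) then (1:ℝ) else 0)
          - ((Jm p - 1) a c * (if b = d then (1:ℝ) else 0)
            + (if a = c then (1:ℝ) else 0) * (Jm q - 1) b d) := by
      simp [hMc, hM, Matrix.kroneckerMap_apply, Matrix.one_apply, Jm]
    rcases eq_or_ne a c with rfl | hac <;> rcases eq_or_ne b d with rfl | hbd
    · rw [adjMat_apply_neg (by rw [compl_adj_iff]; simp), hE]
      simp [Jm, Matrix.sub_apply, Matrix.one_apply]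
    · rw [adjMat_apply_neg (by rw [compl_adj_iff]; simp), hE]
      simp [Jm, Matrix.sub_apply, Matrix.one_apply, hbd, Prod.ext_iff]
    · rw [adjMat_apply_neg (by rw [compl_adj_iff]; simp), hE]
      simp [Jm, Matrix.sub_apply, Matrix.one_apply, hac, Prod.ext_iff]
    · rw [adjMat_apply_pos (by rw [compl_adj_iff]; exact ⟨hac, hbd⟩), hE]
      simp [Jm, Matrix.sub_apply, Matrix.one_apply, hac, hbd, Prod.ext_iff]
  have hEL : energy G.lineGraph = ∑ x : Fin p × Fin q, |dLin p q x| :=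
    energy_eq_of_conj G.lineGraph (φ p q) M S Uk (dLin p q) hadjM hSU hMS
  have hEC : energy G.lineGraphᶜ = ∑ x : Fin p × Fin q, |dComp p q x| :=
    energy_eq_of_conj G.lineGraphᶜ (φ p q) Mc S Uk (dComp p q) hadjMc hSU hMcS
  have hp' : (2 : ℝ) ≤ (p : ℝ) := by exact_mod_cast hp
  have hq' : (2 : ℝ) ≤ (q : ℝ) := by exact_mod_cast hq
  have habsL : ∀ (i : Fin p) (j : Fin q), |dLin p q (i, j)|
      = if i = 0 then (if j = 0 then (p:ℝ) + (q:ℝ) - 2 else (p:ℝ) - 2)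
        else (if j = 0 then (q:ℝ) - 2 else 2) := by
    intro i j
    simp only [dLin]
    by_cases hi : i = 0 <;> by_cases hj : j = 0
    · rw [if_pos hi, if_pos hj, if_pos hi, if_pos hj, abs_of_nonneg (by linarith)]; ring
    · rw [if_pos hi, if_neg hj, if_pos hi, if_neg hj, abs_of_nonneg (by linarith)]; ring
    · rw [if_neg hi, if_pos hj, if_neg hi, if_pos hj, abs_of_nonneg (by linarith)]; ring
    · rw [if_neg hi, if_neg hj, if_neg hi, if_neg hj, abs_of_nonpos (by linarith)]; ring
  have habsC : ∀ (i : Fin p) (j : Fin q), |dComp p q (i, j)|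
      = if i = 0 then (if j = 0 then ((p:ℝ) - 1) * ((q:ℝ) - 1) else (p:ℝ) - 1)
        else (if j = 0 then (q:ℝ) - 1 else 1) := by
    intro i j
    simp only [dComp, dLin]
    by_cases hi : i = 0 <;> by_cases hj : j = 0
    · rw [if_pos hi, if_pos hj, if_pos hi, if_pos hj, abs_of_nonneg (by nlinarith)]; ring
    · rw [if_pos hi, if_neg hj, if_pos hi, if_neg hj, abs_of_nonpos (by linarith)]; ring
    · rw [if_neg hi, if_pos hj, if_neg hi, if_pos hj, abs_of_nonpos (by linarith)]; ring
    · rw [if_neg hi, if_neg hj, if_neg hi, if_neg hj, abs_of_nonneg (by norm_num)]; ring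
  have hL2 : ∀ i : Fin p, ∑ j : Fin q, |dLin p q (i, j)|
      = if i = 0 then (((p:ℝ) + (q:ℝ) - 2) + ((q:ℝ) - 1) * ((p:ℝ) - 2))
        else (((q:ℝ) - 2) + ((q:ℝ) - 1) * 2) := by
    intro i
    rw [Finset.sum_congr rfl fun j _ => habsL i j]
    by_cases hi : i = 0
    · simp only [if_pos hi]; rw [sum_if_zero]
    · simp only [if_neg hi]; rw [sum_if_zero]
  have hC2 : ∀ i : Fin p, ∑ j : Fin q, |dComp p q (i, j)|
      = if i = 0 then (((p:ℝ) - 1) * ((q:ℝ) - 1) + ((q:ℝ) - 1) * ((p:ℝ) - 1))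
        else (((q:ℝ) - 1) + ((q:ℝ) - 1) * 1) := by
    intro i
    rw [Finset.sum_congr rfl fun j _ => habsC i j]
    by_cases hi : i = 0
    · simp only [if_pos hi]; rw [sum_if_zero]
    · simp only [if_neg hi]; rw [sum_if_zero]
  rw [hEL, hEC, Fintype.sum_prod_type, Fintype.sum_prod_type,
    Finset.sum_congr rfl fun i _ => hL2 i, Finset.sum_congr rfl fun i _ => hC2 i,
    sum_if_zero, sum_if_zero]
  ring
end

section
/- For every integer l ≥ 4, the incidence graph IG(l, l-1, l-2) of the symmetric 2-(l, l-1, l-2) design and its complement are complementary equienergetic: E(IG(l, l-1, l-2)) = E(complement of IG(l, l-1, l-2)) = 4(l - 1), and IG(l, l-1, l-2) is not isomorphic to its complement. -/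
open Polynomial

/-- The incidence graph `IG(l, l-1, l-2)` of the symmetric 2-`(l, l-1, l-2)` design:
the bipartite graph on `Fin l ⊕ Fin l` where a left vertex `i` is adjacent to a right
vertex `j` iff `i ≠ j` (the crown graph on `2l` vertices). -/
def incidenceGraphIG (l : ℕ) : SimpleGraph (Fin l ⊕ Fin l) :=
  SimpleGraph.fromRel (fun a b => ∃ i j : Fin l, i ≠ j ∧ a = Sum.inl i ∧ b = Sum.inr j)

section Aux

open Matrix

set_option linter.unnecessarySeqFocus false
set_option linter.unreachableTactic false
set_option linter.unusedTactic false

lemma IG.det_field {K : Type*} [Field K] (l : ℕ) (hl : 0 < l) (c : K) (hc : c ≠ 0) :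
    (c • (1 : Matrix (Fin l) (Fin l) K) - Matrix.of fun _ _ => 1).det
      = c ^ (l - 1) * (c - l) := by
  have h1 : c • (1 : Matrix (Fin l) (Fin l) K) - Matrix.of (fun _ _ => 1)
      = c • (1 + replicateCol Unit (fun _ => -c⁻¹) * replicateRow Unit (fun _ => (1:K))) := by
    ext i j
    simp only [Matrix.sub_apply, Matrix.smul_apply, Matrix.add_apply, Matrix.mul_apply,
      Matrix.of_apply, Matrix.replicateCol_apply, Matrix.replicateRow_apply, Finset.univ_unique,
      Finset.sum_singleton, smul_eq_mul]
    by_cases h : i = j <;> field_simp [h, Matrix.one_apply] <;> ring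
  rw [h1, det_smul, det_one_add_replicateCol_mul_replicateRow]
  have h2 : ((fun _ : Fin l => (1:K)) ⬝ᵥ fun _ => -c⁻¹) = -(l * c⁻¹) := by
    simp [dotProduct]
  rw [h2, Fintype.card_fin]
  have hc' : c ^ l = c ^ (l - 1) * c := by
    conv_lhs => rw [← Nat.succ_pred_eq_of_pos hl]
    rw [pow_succ]; rfl
  rw [hc']
  field_simp
  ring

lemma IG.det_domain {R : Type*} [CommRing R] [IsDomain R] (l : ℕ) (hl : 0 < l) (c : R)
    (hc : c ≠ 0) :
    (c • (1 : Matrix (Fin l) (Fin l) R) - Matrix.of fun _ _ => 1).det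
      = c ^ (l - 1) * (c - l) := by
  set f := algebraMap R (FractionRing R)
  have hf : Function.Injective f := IsFractionRing.injective R (FractionRing R)
  apply hf
  rw [RingHom.map_det]
  have hmap : f.mapMatrix (c • (1 : Matrix (Fin l) (Fin l) R) - Matrix.of fun _ _ => 1)
      = (f c) • (1 : Matrix (Fin l) (Fin l) (FractionRing R)) - Matrix.of fun _ _ => 1 := by
    ext i j
    by_cases h : i = j <;> simp [Matrix.one_apply, h]
  have hfc : f c ≠ 0 := fun h => hc (hf (by simpa using h))
  rw [hmap, IG.det_field l hl _ hfc]; simp [f.map_mul, f.map_pow, f.map_sub]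

lemma IG.det_domain_add {R : Type*} [CommRing R] [IsDomain R] (l : ℕ) (hl : 0 < l) (c : R)
    (hc : c ≠ 0) :
    (c • (1 : Matrix (Fin l) (Fin l) R) + Matrix.of fun _ _ => 1).det
      = c ^ (l - 1) * (c + l) := by
  have h : c • (1 : Matrix (Fin l) (Fin l) R) + Matrix.of (fun _ _ => 1)
      = -((-c) • (1 : Matrix (Fin l) (Fin l) R) - Matrix.of fun _ _ => 1) := by
    ext i j; simp; ring
  rw [h, Matrix.det_neg, IG.det_domain l hl (-c) (neg_ne_zero.2 hc), Fintype.card_fin]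
  have hodd : Odd (l + (l - 1)) := ⟨l - 1, by omega⟩
  have h2 : (-1 : R) ^ l * (-1 : R) ^ (l - 1) = -1 := by
    rw [← pow_add]; exact hodd.neg_one_pow
  calc (-1 : R) ^ l * ((-c) ^ (l - 1) * (-c - ↑l))
      = -(((-1:R)^l * (-1:R)^(l-1)) * (c ^ (l-1) * (c + ↑l))) := by
        rw [neg_pow]; ring
    _ = c ^ (l - 1) * (c + ↑l) := by rw [h2]; ring

lemma IG.det_fromBlocks_symm {R m : Type*} [CommRing R] [Fintype m] [DecidableEq m]
    (A B : Matrix m m R) :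
    (Matrix.fromBlocks A B B A).det = (A + B).det * (A - B).det := by
  have key : Matrix.fromBlocks (1 : Matrix m m R) (1 : Matrix m m R) (0 : Matrix m m R)
        (1 : Matrix m m R) * Matrix.fromBlocks A B B A *
      Matrix.fromBlocks (1 : Matrix m m R) (-1 : Matrix m m R) (0 : Matrix m m R)
        (1 : Matrix m m R)
      = Matrix.fromBlocks (A + B) 0 B (A - B) := by
    simp [Matrix.fromBlocks_multiply, Matrix.mul_sub, Matrix.sub_mul]
    refine ⟨by abel, by abel⟩
  have h1 : ((Matrix.fromBlocks (1 : Matrix m m R) (1 : Matrix m m R) (0 : Matrix m m R)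
      (1 : Matrix m m R)).det) = 1 := by
    rw [Matrix.det_fromBlocks_zero₂₁]; simp
  have h2 : ((Matrix.fromBlocks (1 : Matrix m m R) (-1 : Matrix m m R) (0 : Matrix m m R)
      (1 : Matrix m m R)).det) = 1 := by
    rw [Matrix.det_fromBlocks_zero₂₁]; simp
  have := congrArg Matrix.det key
  rw [Matrix.det_mul, Matrix.det_mul, h1, h2, Matrix.det_fromBlocks_zero₁₂] at this
  simpa using this

lemma IG.energy_eq {V : Type*} [inst1 : Fintype V] [inst2 : DecidableEq V] (G : SimpleGraph V) :
    energy G = (((adjMat G).charpoly).roots.map (fun x => |x|)).sum := by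
  unfold energy
  rw [Subsingleton.elim (Fintype.ofFinite V) inst1, Subsingleton.elim (Classical.decEq V) inst2]

lemma IG.adjMat_apply {V : Type*} [Finite V] (G : SimpleGraph V) [DecidableRel G.Adj] (i j : V) :
    adjMat G i j = if G.Adj i j then 1 else 0 := by
  unfold adjMat
  by_cases h : G.Adj i j <;> simp [h]

variable {l : ℕ}

@[simp] lemma IG_adj_inl_inr (i j : Fin l) :
    (incidenceGraphIG l).Adj (Sum.inl i) (Sum.inr j) ↔ i ≠ j := by
  simp only [incidenceGraphIG, SimpleGraph.fromRel_adj]; aesop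

@[simp] lemma IG_adj_inr_inl (i j : Fin l) :
    (incidenceGraphIG l).Adj (Sum.inr i) (Sum.inl j) ↔ j ≠ i := by
  simp only [incidenceGraphIG, SimpleGraph.fromRel_adj]; aesop

@[simp] lemma IG_adj_inl_inl (i j : Fin l) :
    ¬ (incidenceGraphIG l).Adj (Sum.inl i) (Sum.inl j) := by
  simp only [incidenceGraphIG, SimpleGraph.fromRel_adj]; aesop

@[simp] lemma IG_adj_inr_inr (i j : Fin l) :
    ¬ (incidenceGraphIG l).Adj (Sum.inr i) (Sum.inr j) := by
  simp only [incidenceGraphIG, SimpleGraph.fromRel_adj]; aesop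

instance : DecidableRel (incidenceGraphIG l).Adj := fun a b => by
  rcases a with i | i <;> rcases b with j | j
  · exact .isFalse (IG_adj_inl_inl i j)
  · exact decidable_of_iff _ (IG_adj_inl_inr i j).symm
  · exact decidable_of_iff _ (IG_adj_inr_inl i j).symm
  · exact .isFalse (IG_adj_inr_inr i j)

lemma IG.adjMat_IG :
    adjMat (incidenceGraphIG l) =
      Matrix.fromBlocks 0 ((Matrix.of fun _ _ => (1:ℝ)) - 1)
        ((Matrix.of fun _ _ => (1:ℝ)) - 1) 0 := by
  ext i j
  rcases i with i | i <;> rcases j with j | j <;>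
    rw [IG.adjMat_apply] <;>
    by_cases h : i = j <;>
    simp [h, Matrix.one_apply, Ne.symm]

lemma IG.adjMat_IG_compl :
    adjMat (incidenceGraphIG l)ᶜ =
      Matrix.fromBlocks ((Matrix.of fun _ _ => (1:ℝ)) - 1) 1 1
        ((Matrix.of fun _ _ => (1:ℝ)) - 1) := by
  letI : DecidableRel (incidenceGraphIG l)ᶜ.Adj := fun a b => instDecidableAnd
  ext i j
  rcases i with i | i <;> rcases j with j | j <;>
    rw [IG.adjMat_apply] <;>
    by_cases h : i = j <;>
    simp [h, Matrix.one_apply, Ne.symm, SimpleGraph.compl_adj]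

lemma IG.hX1 : (X + 1 : ℝ[X]) ≠ 0 := fun h => by
  have := congrArg (Polynomial.eval 0) h; simp at this
lemma IG.hX1' : (X - 1 : ℝ[X]) ≠ 0 := fun h => by
  have := congrArg (Polynomial.eval 0) h; simp at this
lemma IG.hX2 : (X + 2 : ℝ[X]) ≠ 0 := fun h => by
  have := congrArg (Polynomial.eval 0) h; simp at this

lemma IG.charpoly_IG_mat (hl : 0 < l) :
    (Matrix.fromBlocks (0 : Matrix (Fin l) (Fin l) ℝ)
      ((Matrix.of fun _ _ => (1:ℝ)) - 1) ((Matrix.of fun _ _ => (1:ℝ)) - 1)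
      (0 : Matrix (Fin l) (Fin l) ℝ)).charpoly
    = (X + 1) ^ (l - 1) * (X + 1 - (l : ℝ[X])) *
      ((X - 1) ^ (l - 1) * (X - 1 + (l : ℝ[X]))) := by
  unfold Matrix.charpoly
  rw [Matrix.charmatrix_fromBlocks, IG.det_fromBlocks_symm]
  have e1 : Matrix.charmatrix (0 : Matrix (Fin l) (Fin l) ℝ) +
      -(((Matrix.of fun _ _ => (1:ℝ)) - 1).map C)
      = (X + 1 : ℝ[X]) • (1 : Matrix (Fin l) (Fin l) ℝ[X]) - Matrix.of fun _ _ => 1 := by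
    apply Matrix.ext; intro i j
    by_cases h : i = j <;>
      simp [Matrix.charmatrix_apply, Matrix.one_apply, Matrix.diagonal_apply, h] <;> ring
  have e2 : Matrix.charmatrix (0 : Matrix (Fin l) (Fin l) ℝ) -
      -(((Matrix.of fun _ _ => (1:ℝ)) - 1).map C)
      = (X - 1 : ℝ[X]) • (1 : Matrix (Fin l) (Fin l) ℝ[X]) + Matrix.of fun _ _ => 1 := by
    apply Matrix.ext; intro i j
    by_cases h : i = j <;>
      simp [Matrix.charmatrix_apply, Matrix.one_apply, Matrix.diagonal_apply, h] <;> ring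
  rw [e1, e2, IG.det_domain l hl _ IG.hX1, IG.det_domain_add l hl _ IG.hX1']

lemma IG.charpoly_IG_compl_mat (hl : 0 < l) :
    (Matrix.fromBlocks ((Matrix.of fun _ _ => (1:ℝ)) - 1) (1 : Matrix (Fin l) (Fin l) ℝ)
      (1 : Matrix (Fin l) (Fin l) ℝ) ((Matrix.of fun _ _ => (1:ℝ)) - 1)).charpoly
    = X ^ (l - 1) * (X - (l : ℝ[X])) *
      ((X + 2) ^ (l - 1) * (X + 2 - (l : ℝ[X]))) := by
  unfold Matrix.charpoly
  rw [Matrix.charmatrix_fromBlocks, IG.det_fromBlocks_symm]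
  have e1 : Matrix.charmatrix ((Matrix.of fun _ _ => (1:ℝ)) - 1) +
      -((1 : Matrix (Fin l) (Fin l) ℝ).map C)
      = (X : ℝ[X]) • (1 : Matrix (Fin l) (Fin l) ℝ[X]) - Matrix.of fun _ _ => 1 := by
    apply Matrix.ext; intro i j
    by_cases h : i = j <;>
      simp [Matrix.charmatrix_apply, Matrix.one_apply, Matrix.diagonal_apply, h] <;> ring
  have e2 : Matrix.charmatrix ((Matrix.of fun _ _ => (1:ℝ)) - 1) -
      -((1 : Matrix (Fin l) (Fin l) ℝ).map C)
      = (X + 2 : ℝ[X]) • (1 : Matrix (Fin l) (Fin l) ℝ[X]) - Matrix.of fun _ _ => 1 := by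
    apply Matrix.ext; intro i j
    by_cases h : i = j <;>
      simp [Matrix.charmatrix_apply, Matrix.one_apply, Matrix.diagonal_apply, h] <;> ring
  rw [e1, e2, IG.det_domain l hl _ X_ne_zero, IG.det_domain l hl _ IG.hX2]

lemma IG.abs_roots_quad (a b c d : ℝ) (k : ℕ) :
    (((((X - C a) ^ k * (X - C b)) * ((X - C c) ^ k * (X - C d))).roots.map
      (fun x => |x|)).sum)
    = k * |a| + |b| + (k * |c| + |d|) := by
  have h1 : ((X - C a) ^ k * (X - C b)) ≠ 0 :=
    mul_ne_zero (pow_ne_zero _ (X_sub_C_ne_zero a)) (X_sub_C_ne_zero b)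
  have h2 : ((X - C c) ^ k * (X - C d)) ≠ 0 :=
    mul_ne_zero (pow_ne_zero _ (X_sub_C_ne_zero c)) (X_sub_C_ne_zero d)
  rw [roots_mul (mul_ne_zero h1 h2), roots_mul h1, roots_mul h2,
    roots_pow, roots_pow, roots_X_sub_C, roots_X_sub_C, roots_X_sub_C, roots_X_sub_C]
  simp [Multiset.nsmul_singleton, Multiset.map_replicate, Multiset.sum_replicate, add_assoc,
    nsmul_eq_mul]
  ring

lemma IG.regular : (incidenceGraphIG l).IsRegularOfDegree (l - 1) := by
  intro v
  rw [← SimpleGraph.card_neighborSet_eq_degree, ← Nat.card_eq_fintype_card]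
  rcases v with i | i
  · have h : (incidenceGraphIG l).neighborSet (Sum.inl i) = Sum.inr '' {j | j ≠ i} := by
      ext w; rcases w with j | j <;> simp [SimpleGraph.neighborSet, eq_comm]
    rw [h, Nat.card_image_of_injective Sum.inr_injective, Nat.card_eq_fintype_card]
    simp [Set.card_ne_eq]
    exact (congrArg Finset.card (Finset.filter_ne' Finset.univ i)).trans (by simp)
  · have h : (incidenceGraphIG l).neighborSet (Sum.inr i) = Sum.inl '' {j | j ≠ i} := by
      ext w; rcases w with j | j <;> simp [SimpleGraph.neighborSet, eq_comm]
    rw [h, Nat.card_image_of_injective Sum.inl_injective, Nat.card_eq_fintype_card]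
    simp [Set.card_ne_eq]
    exact (congrArg Finset.card (Finset.filter_ne' Finset.univ i)).trans (by simp)

lemma IG.not_iso (hl : 4 ≤ l) :
    ¬ Nonempty (incidenceGraphIG l ≃g (incidenceGraphIG l)ᶜ) := by
  rintro ⟨φ⟩
  have hcompl : ((incidenceGraphIG l)ᶜ).IsRegularOfDegree (2 * l - 1 - (l - 1)) := by
    have := (IG.regular (l := l)).compl
    simpa [Fintype.card_sum, two_mul] using this
  have hv : (incidenceGraphIG l).degree (Sum.inl ⟨0, by omega⟩) =
      ((incidenceGraphIG l)ᶜ).degree (φ (Sum.inl ⟨0, by omega⟩)) := by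
    rw [← SimpleGraph.card_neighborSet_eq_degree, ← SimpleGraph.card_neighborSet_eq_degree]
    exact Fintype.card_congr (φ.mapNeighborSet _)
  rw [IG.regular _, hcompl _] at hv
  omega

end Aux

/-- For `l ≥ 4`, the incidence graph `IG(l, l-1, l-2)` and its complement are complementary
equienergetic: they have equal energy `4(l-1)` and are not isomorphic. -/
theorem incidenceGraph_compl_equienergetic (l : ℕ) (hl : 4 ≤ l) :
    energy (incidenceGraphIG l) = energy (incidenceGraphIG l)ᶜ ∧
    energy (incidenceGraphIG l) = 4 * ((l : ℝ) - 1) ∧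
    ¬ Nonempty (incidenceGraphIG l ≃g (incidenceGraphIG l)ᶜ) := by
  have h0 : 0 < l := by omega
  have hl4 : (4:ℝ) ≤ (l:ℝ) := by exact_mod_cast hl
  have hk : ((l - 1 : ℕ) : ℝ) = (l : ℝ) - 1 := by
    push_cast [Nat.cast_sub (by omega : 1 ≤ l)]; ring
  have hE1 : energy (incidenceGraphIG l) = 4 * ((l : ℝ) - 1) := by
    rw [IG.energy_eq, IG.adjMat_IG, IG.charpoly_IG_mat h0]
    have hfac : (X + 1 : ℝ[X]) ^ (l - 1) * (X + 1 - (l : ℝ[X])) *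
        ((X - 1) ^ (l - 1) * (X - 1 + (l : ℝ[X])))
        = (X - C (-1 : ℝ)) ^ (l - 1) * (X - C ((l:ℝ) - 1)) *
          ((X - C (1:ℝ)) ^ (l - 1) * (X - C (1 - (l:ℝ)))) := by
      have hC : ((l:ℕ) : ℝ[X]) = C ((l:ℕ) : ℝ) := by simp
      rw [hC]; simp only [map_sub, map_neg, map_one, C_1]; ring
    rw [hfac, IG.abs_roots_quad, hk]
    rw [abs_of_nonneg (by linarith : (0:ℝ) ≤ (l:ℝ) - 1), abs_of_nonpos (by linarith : (1 - (l:ℝ)) ≤ 0)]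
    norm_num
    ring
  have hE2 : energy (incidenceGraphIG l)ᶜ = 4 * ((l : ℝ) - 1) := by
    rw [IG.energy_eq, IG.adjMat_IG_compl, IG.charpoly_IG_compl_mat h0]
    have hfac : (X : ℝ[X]) ^ (l - 1) * (X - (l : ℝ[X])) *
        ((X + 2) ^ (l - 1) * (X + 2 - (l : ℝ[X])))
        = (X - C (0 : ℝ)) ^ (l - 1) * (X - C ((l:ℝ))) *
          ((X - C (-2:ℝ)) ^ (l - 1) * (X - C ((l:ℝ) - 2))) := by
      have hC : ((l:ℕ) : ℝ[X]) = C ((l:ℕ) : ℝ) := by simp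
      rw [hC]; simp only [map_sub, map_neg, map_ofNat, C_0]; ring
    rw [hfac, IG.abs_roots_quad, hk]
    rw [abs_of_nonneg (by linarith : (0:ℝ) ≤ (l:ℝ)),
      abs_of_nonneg (by linarith : (0:ℝ) ≤ (l:ℝ) - 2)]
    norm_num
    ring
  exact ⟨by rw [hE1, hE2], hE1, IG.not_iso hl⟩
end
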